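/- Let Q ≥ 2 be an integer and σ > 0, and define u : ℝ^Q → ℝ by u(x) = (1+|x|²)^{σ/2}. Then there exists a constant C > 0, depending only on σ and Q, such that for every x ∈ ℝ^Q, div(∇u/√(1+|∇u|²))(x) ≥ C (1+|x|)^{σ−2} / √(1+|∇u(x)|²). -/

import Mathlib

open Set Filter Classical

noncomputable section

/-- The divergence of a vector field `V` on `ℝ^Q`: the sum of the partial derivatives
`∂ᵢ Vᵢ`. -/
def divg {Q : ℕ} (V : EuclideanSpace ℝ (Fin Q) → EuclideanSpace ℝ (Fin Q))
    (x : EuclideanSpace ℝ (Fin Q)) : ℝ :=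
  ∑ i, fderiv ℝ V x (EuclideanSpace.single i 1) i

section Aux

lemma hasGradientAt_of_innerSL {Q : ℕ} {f : EuclideanSpace ℝ (Fin Q) → ℝ}
    {v x : EuclideanSpace ℝ (Fin Q)}
    (h : HasFDerivAt f (innerSL ℝ v) x) : HasGradientAt f v x := by
  rw [hasGradientAt_iff_hasFDerivAt]
  refine h.congr_fderiv ?_
  ext; simp

/-- The gradient of `u`. -/
lemma grad_u {Q : ℕ} (σ : ℝ) (x : EuclideanSpace ℝ (Fin Q)) :
    HasGradientAt (fun y : EuclideanSpace ℝ (Fin Q) => (1 + ‖y‖ ^ 2) ^ (σ / 2))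
      ((σ * (1 + ‖x‖ ^ 2) ^ (σ / 2 - 1)) • x) x := by
  apply hasGradientAt_of_innerSL
  have h1 : HasFDerivAt (fun y : EuclideanSpace ℝ (Fin Q) => 1 + ‖y‖ ^ 2)
      (2 • innerSL ℝ x) x := by
    simpa using (hasStrictFDerivAt_norm_sq x).hasFDerivAt.const_add 1
  have hpos : (0:ℝ) < 1 + ‖x‖ ^ 2 := by positivity
  have h2 : HasDerivAt (fun s : ℝ => s ^ (σ / 2)) (σ / 2 * (1 + ‖x‖ ^ 2) ^ (σ / 2 - 1))
      (1 + ‖x‖ ^ 2) := Real.hasDerivAt_rpow_const (Or.inl hpos.ne')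
  have := h2.comp_hasFDerivAt x h1
  refine this.congr_fderiv ?_
  ext y
  simp [real_inner_smul_left, real_inner_smul_right]
  ring

lemma step_m2 (σ : ℝ) (r : ℝ) (hr : 0 ≤ r) :
    min 1 ((2:ℝ) ^ ((2-σ)/2)) * (1+r) ^ (σ-2) ≤ (1+r^2) ^ (σ/2-1) := by
  have hb : (0:ℝ) < 1 + r := by linarith
  have hp : (0:ℝ) < 1 + r^2 := by positivity
  have hsq : (1+r) ^ (σ-2) = ((1+r)^2) ^ (σ/2-1) := by
    rw [← Real.rpow_natCast (1+r) 2, ← Real.rpow_mul hb.le]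
    norm_num
    ring_nf
  have h1 : 1 + r^2 ≤ (1+r)^2 := by nlinarith
  have h2 : (1+r)^2 ≤ 2*(1+r^2) := by nlinarith [sq_nonneg (r-1)]
  rcases le_or_gt σ 2 with hσ2 | hσ2
  · have hm : min 1 ((2:ℝ) ^ ((2-σ)/2)) = 1 := by
      rw [min_eq_left]
      apply Real.one_le_rpow one_le_two (by linarith)
    rw [hm, one_mul, hsq]
    exact Real.rpow_le_rpow_of_nonpos hp h1 (by linarith)
  · have hm : min 1 ((2:ℝ) ^ ((2-σ)/2)) = (2:ℝ) ^ ((2-σ)/2) := by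
      rw [min_eq_right]
      apply Real.rpow_le_one_of_one_le_of_nonpos one_le_two (by linarith)
    rw [hm, hsq]
    calc (2:ℝ) ^ ((2-σ)/2) * ((1+r)^2) ^ (σ/2-1)
        ≤ (2:ℝ) ^ ((2-σ)/2) * (2*(1+r^2)) ^ (σ/2-1) := by
          apply mul_le_mul_of_nonneg_left _ (Real.rpow_nonneg (by norm_num) _)
          exact Real.rpow_le_rpow (by positivity) h2 (by linarith)
      _ = (1+r^2) ^ (σ/2-1) := by
          rw [Real.mul_rpow (by norm_num) hp.le, ← mul_assoc, ← Real.rpow_add (by norm_num)]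
          rw [show (2-σ)/2 + (σ/2-1) = 0 by ring, Real.rpow_zero, one_mul]

lemma step_E (σ : ℝ) (hσ : 0 < σ) (t : ℝ) (ht : 0 ≤ t) :
    -(σ * max (1-σ) 0 * (1+t) ^ (σ/2-1)) ≤
      σ * (1+t) ^ (σ/2-2) * (1+(σ-1)*t) / (1 + σ^2*t*(1+t) ^ (σ-2)) := by
  have hp : (0:ℝ) < 1 + t := by linarith
  have hG : (1:ℝ) ≤ 1 + σ^2*t*(1+t) ^ (σ-2) := by
    have : (0:ℝ) ≤ σ^2*t*(1+t) ^ (σ-2) := by positivity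
    linarith
  have hG0 : (0:ℝ) < 1 + σ^2*t*(1+t) ^ (σ-2) := by linarith
  have hP1 : (0:ℝ) < (1+t) ^ (σ/2-2) := Real.rpow_pos_of_pos hp _
  have hA : (1+t) ^ (σ/2-1) = (1+t) * (1+t) ^ (σ/2-2) := by
    rw [show σ/2-1 = 1 + (σ/2-2) by ring, Real.rpow_add hp, Real.rpow_one]
  rcases le_or_gt 1 σ with h1 | h1
  · have hmax : max (1-σ) 0 = 0 := max_eq_right (by linarith)
    rw [hmax, mul_zero, zero_mul, neg_zero]
    have hE : (0:ℝ) ≤ 1+(σ-1)*t := by nlinarith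
    positivity
  · have hmax : max (1-σ) 0 = 1-σ := max_eq_left (by linarith)
    rw [hmax, hA, le_div_iff₀ hG0]
    have hk : (0:ℝ) ≤ σ*(1-σ)*((1+t)*(1+t)^(σ/2-2)) := by
      have : (0:ℝ) ≤ 1-σ := by linarith
      positivity
    nlinarith [mul_nonneg hk (by linarith : (0:ℝ) ≤ 1 + σ^2*t*(1+t)^(σ-2) - 1),
      mul_nonneg (mul_nonneg hσ.le hP1.le) (by linarith : (0:ℝ) ≤ 2-σ)]

lemma scalar_key (Q : ℕ) (hQ : 2 ≤ Q) (σ : ℝ) (hσ : 0 < σ) (r : ℝ) (hr : 0 ≤ r) :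
    σ * min σ 1 * min 1 ((2:ℝ) ^ ((2-σ)/2)) * (1+r) ^ (σ-2)
      ≤ (Q-1 : ℝ) * (σ * (1+r^2) ^ (σ/2-1))
        + σ * (1+r^2) ^ (σ/2-2) * (1+(σ-1)*r^2) / (1 + σ^2*r^2*(1+r^2) ^ (σ-2)) := by
  have ht : (0:ℝ) ≤ r^2 := sq_nonneg r
  have hp : (0:ℝ) < 1 + r^2 := by linarith
  have hA : (0:ℝ) < (1+r^2) ^ (σ/2-1) := Real.rpow_pos_of_pos hp _
  have hmin : (0:ℝ) < σ * min σ 1 := by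
    have : (0:ℝ) < min σ 1 := lt_min hσ one_pos
    positivity
  have h1 : σ * min σ 1 * min 1 ((2:ℝ) ^ ((2-σ)/2)) * (1+r) ^ (σ-2)
      ≤ σ * min σ 1 * (1+r^2) ^ (σ/2-1) := by
    rw [mul_assoc]
    exact mul_le_mul_of_nonneg_left (step_m2 σ r hr) hmin.le
  have hE := step_E σ hσ (r^2) ht
  have hmm : 1 - max (1-σ) 0 = min σ 1 := by
    rcases le_total σ 1 with h | h
    · rw [max_eq_left (by linarith), min_eq_left h]; ring
    · rw [max_eq_right (by linarith), min_eq_right h]; ring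
  have hQ1 : (1:ℝ) ≤ (Q:ℝ) - 1 := by
    have : (2:ℝ) ≤ (Q:ℝ) := by exact_mod_cast hQ
    linarith
  have h2 : σ * min σ 1 * (1+r^2) ^ (σ/2-1)
      ≤ (Q-1 : ℝ) * (σ * (1+r^2) ^ (σ/2-1)) - σ * max (1-σ) 0 * (1+r^2) ^ (σ/2-1) := by
    have heq : σ * min σ 1 * (1+r^2) ^ (σ/2-1)
        = (1 : ℝ) * (σ * (1+r^2) ^ (σ/2-1)) - σ * max (1-σ) 0 * (1+r^2) ^ (σ/2-1) := by
      rw [← hmm]; ring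
    rw [heq]
    have : (0:ℝ) ≤ σ * (1+r^2) ^ (σ/2-1) := by positivity
    nlinarith
  linarith

lemma deriv_identity (Q : ℕ) (σ t : ℝ) (hσ : 0 < σ) (ht : 0 ≤ t) :
    (Q:ℝ) * ((Real.sqrt (1+σ^2*t*(1+t) ^ (σ-2)))⁻¹ * (σ*(1+t) ^ (σ/2-1)))
      + 2*t*( -(1/(2*Real.sqrt (1+σ^2*t*(1+t) ^ (σ-2)))
              * (σ^2*((1+t) ^ (σ-2) + t*((σ-2)*(1+t) ^ (σ-3)))))
            / (Real.sqrt (1+σ^2*t*(1+t) ^ (σ-2)))^2 * (σ*(1+t) ^ (σ/2-1))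
          + (Real.sqrt (1+σ^2*t*(1+t) ^ (σ-2)))⁻¹ * (σ*((σ/2-1)*(1+t) ^ (σ/2-2))) )
    = ((Q-1 : ℝ)*(σ*(1+t) ^ (σ/2-1))
        + σ*(1+t) ^ (σ/2-2)*(1+(σ-1)*t)/(1+σ^2*t*(1+t) ^ (σ-2)))
      / Real.sqrt (1+σ^2*t*(1+t) ^ (σ-2)) := by
  have hp : (0:ℝ) < 1 + t := by linarith
  have hG0 : (0:ℝ) < 1+σ^2*t*(1+t) ^ (σ-2) := by positivity
  set S := Real.sqrt (1+σ^2*t*(1+t) ^ (σ-2)) with hSdef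
  have hS : 0 < S := Real.sqrt_pos.mpr hG0
  set P1 := (1+t) ^ (σ/2-2) with hP1def
  have hP1 : 0 < P1 := Real.rpow_pos_of_pos hp _
  have h1 : (1+t) ^ (σ/2-1) = (1+t) * P1 := by
    rw [hP1def, show σ/2-1 = 1 + (σ/2-2) by ring, Real.rpow_add hp, Real.rpow_one]
  have h2 : (1+t) ^ (σ-2) = ((1+t) * P1)^2 := by
    rw [← h1, show σ-2 = (σ/2-1)*2 by ring, Real.rpow_mul hp.le, Real.rpow_two]
  have h3 : (1+t) ^ (σ-3) = (1+t) * P1^2 := by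
    rw [hP1def, show σ-3 = 1 + ((σ/2-2)+(σ/2-2)) by ring, Real.rpow_add hp, Real.rpow_one,
      Real.rpow_add hp, sq]
  rw [h1, h2, h3]
  have hSS : 1+σ^2*t*((1+t) * P1)^2 = S * S := by
    rw [hSdef, ← h2, Real.mul_self_sqrt hG0.le]
  rw [hSS]
  have hS0 : S ≠ 0 := hS.ne'
  field_simp
  linear_combination (-(1+t*(σ-1))) * hSS

lemma divg_radial (Q : ℕ) {ψ : ℝ → ℝ} {D : ℝ} (x : EuclideanSpace ℝ (Fin Q))
    (hψ : HasDerivAt ψ D (‖x‖^2)) :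
    divg (fun y => ψ (‖y‖^2) • y) x = Q * ψ (‖x‖^2) + 2 * ‖x‖^2 * D := by
  have hn : HasFDerivAt (fun y : EuclideanSpace ℝ (Fin Q) => ‖y‖^2)
      (2 • innerSL ℝ x) x := (hasStrictFDerivAt_norm_sq x).hasFDerivAt
  have hscal := hψ.comp_hasFDerivAt x hn
  have hF := hscal.smul (hasFDerivAt_id x)
  unfold divg
  have hF' : HasFDerivAt (fun y : EuclideanSpace ℝ (Fin Q) => ψ (‖y‖^2) • y)
      ((ψ (‖x‖^2)) • ContinuousLinearMap.id ℝ (EuclideanSpace ℝ (Fin Q)) +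
        (D • 2 • (innerSL ℝ) x).smulRight x) x := hF
  rw [hF'.fderiv]
  simp only [ContinuousLinearMap.add_apply, ContinuousLinearMap.smul_apply,
    ContinuousLinearMap.smulRight_apply, ContinuousLinearMap.coe_id', id_eq,
    innerSL_apply_apply, PiLp.add_apply, PiLp.smul_apply, smul_eq_mul,
    EuclideanSpace.single_apply, EuclideanSpace.inner_single_right]
  rw [Finset.sum_add_distrib]
  have hx : ∑ i : Fin Q, x i * x i = ‖x‖^2 := by
    rw [← real_inner_self_eq_norm_sq]
    simp [PiLp.inner_apply]
    rw [EuclideanSpace.norm_eq, Real.sq_sqrt (by positivity)]; simp [sq]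
  simp only [if_true, one_mul, mul_one, nsmul_eq_mul, Nat.cast_ofNat, starRingEnd_apply,
    star_trivial]
  rw [Finset.sum_const, Finset.card_univ, Fintype.card_fin, nsmul_eq_mul,
    Finset.sum_congr rfl (fun i _ => show D * (2 * x i) * x i = 2 * D * (x i * x i) by ring),
    ← Finset.mul_sum, hx]
  ring

/-- The radial profile of the normalized gradient field. -/
def psiF (σ : ℝ) : ℝ → ℝ := fun s =>
  (Real.sqrt (1+σ^2*s*(1+s) ^ (σ-2)))⁻¹ * (σ*(1+s) ^ (σ/2-1))

lemma hasDerivAt_psiF (σ t : ℝ) (ht : 0 ≤ t) :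
    HasDerivAt (psiF σ)
      (-(1/(2*Real.sqrt (1+σ^2*t*(1+t) ^ (σ-2)))
          * (σ^2*((1+t) ^ (σ-2) + t*((σ-2)*(1+t) ^ (σ-3)))))
        / (Real.sqrt (1+σ^2*t*(1+t) ^ (σ-2)))^2 * (σ*(1+t) ^ (σ/2-1))
      + (Real.sqrt (1+σ^2*t*(1+t) ^ (σ-2)))⁻¹ * (σ*((σ/2-1)*(1+t) ^ (σ/2-2)))) t := by
  have hp : (0:ℝ) < 1 + t := by linarith
  have h_add : HasDerivAt (fun s : ℝ => 1 + s) 1 t := (hasDerivAt_id t).const_add 1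
  have hre : ∀ e : ℝ, HasDerivAt (fun s : ℝ => (1+s) ^ e) (e*(1+t) ^ (e-1)) t := fun e => by
    simpa [Function.comp_def] using (Real.hasDerivAt_rpow_const (x := 1+t) (Or.inl hp.ne')).comp t h_add
  have hG0 : (0:ℝ) < 1+σ^2*t*(1+t) ^ (σ-2) := by positivity
  have hG : HasDerivAt (fun s : ℝ => 1+σ^2*s*(1+s) ^ (σ-2))
      (σ^2*((1+t) ^ (σ-2) + t*((σ-2)*(1+t) ^ (σ-3)))) t := by
    have h := (((hasDerivAt_id t).mul (hre (σ-2))).const_mul (σ^2)).const_add 1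
    simp only [Pi.mul_apply, ← mul_assoc, one_mul, id_eq] at h
    refine h.congr_deriv ?_
    rw [show σ-3 = σ-2-1 by ring]
    ring
  have hsqrt : HasDerivAt (fun s : ℝ => Real.sqrt (1+σ^2*s*(1+s) ^ (σ-2)))
      (1/(2*Real.sqrt (1+σ^2*t*(1+t) ^ (σ-2)))
        * (σ^2*((1+t) ^ (σ-2) + t*((σ-2)*(1+t) ^ (σ-3))))) t :=
    (Real.hasDerivAt_sqrt hG0.ne').comp t hG
  have hS : 0 < Real.sqrt (1+σ^2*t*(1+t) ^ (σ-2)) := Real.sqrt_pos.mpr hG0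
  have hinv := hsqrt.inv hS.ne'
  have hc : HasDerivAt (fun s : ℝ => σ*(1+s) ^ (σ/2-1)) (σ*((σ/2-1)*(1+t) ^ (σ/2-2))) t := by
    have := (hre (σ/2-1)).const_mul σ
    refine this.congr_deriv ?_
    rw [show σ/2-2 = σ/2-1-1 by ring]
  exact hinv.mul hc

end Aux

/-- For `u(x) = (1+|x|²)^{σ/2}` on `ℝ^Q`, `Q ≥ 2`, `σ > 0`, there is `C > 0` with
`div(∇u/√(1+|∇u|²)) ≥ C(1+|x|)^{σ−2}/√(1+|∇u|²)` everywhere. -/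
theorem statement13 (Q : ℕ) (hQ : 2 ≤ Q) (σ : ℝ) (hσ : 0 < σ) :
    ∃ C : ℝ, 0 < C ∧ ∀ x : EuclideanSpace ℝ (Fin Q),
      C * (1 + ‖x‖) ^ (σ - 2) /
        Real.sqrt (1 + ‖gradient
          (fun y : EuclideanSpace ℝ (Fin Q) => (1 + ‖y‖ ^ 2) ^ (σ / 2)) x‖ ^ 2)
      ≤ divg (fun y : EuclideanSpace ℝ (Fin Q) =>
          (Real.sqrt (1 + ‖gradient
            (fun z : EuclideanSpace ℝ (Fin Q) => (1 + ‖z‖ ^ 2) ^ (σ / 2)) y‖ ^ 2))⁻¹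
          • gradient (fun z : EuclideanSpace ℝ (Fin Q) => (1 + ‖z‖ ^ 2) ^ (σ / 2)) y) x := by
  refine ⟨σ * min σ 1 * min 1 ((2:ℝ) ^ ((2-σ)/2)), ?_, ?_⟩
  · have h1 : (0:ℝ) < min σ 1 := lt_min hσ one_pos
    have h2 : (0:ℝ) < min 1 ((2:ℝ) ^ ((2-σ)/2)) :=
      lt_min one_pos (Real.rpow_pos_of_pos two_pos _)
    positivity
  intro x
  have hgrad : ∀ y : EuclideanSpace ℝ (Fin Q),
      gradient (fun z : EuclideanSpace ℝ (Fin Q) => (1 + ‖z‖ ^ 2) ^ (σ / 2)) y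
        = (σ * (1 + ‖y‖ ^ 2) ^ (σ / 2 - 1)) • y := fun y => (grad_u σ y).gradient
  have hns : ∀ y : EuclideanSpace ℝ (Fin Q),
      ‖gradient (fun z : EuclideanSpace ℝ (Fin Q) => (1 + ‖z‖ ^ 2) ^ (σ / 2)) y‖ ^ 2
        = σ^2*‖y‖^2*(1+‖y‖^2) ^ (σ-2) := by
    intro y
    have hp : (0:ℝ) < 1 + ‖y‖ ^ 2 := by positivity
    rw [hgrad y, norm_smul, mul_pow, Real.norm_eq_abs, sq_abs, mul_pow,
      ← Real.rpow_natCast ((1 + ‖y‖ ^ 2) ^ (σ/2-1)) 2, ← Real.rpow_mul hp.le]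
    rw [show (σ/2-1) * (2:ℕ) = σ-2 by push_cast; ring]
    ring
  have hVeq : (fun y : EuclideanSpace ℝ (Fin Q) =>
      (Real.sqrt (1 + ‖gradient
        (fun z : EuclideanSpace ℝ (Fin Q) => (1 + ‖z‖ ^ 2) ^ (σ / 2)) y‖ ^ 2))⁻¹
      • gradient (fun z : EuclideanSpace ℝ (Fin Q) => (1 + ‖z‖ ^ 2) ^ (σ / 2)) y)
      = fun y : EuclideanSpace ℝ (Fin Q) => psiF σ (‖y‖^2) • y := by
    funext y
    rw [hns y, hgrad y, smul_smul, psiF]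
  rw [hVeq, hns x,
    divg_radial Q x (hasDerivAt_psiF σ (‖x‖^2) (sq_nonneg ‖x‖)),
    show psiF σ (‖x‖^2) = (Real.sqrt (1+σ^2*‖x‖^2*(1+‖x‖^2) ^ (σ-2)))⁻¹
      * (σ*(1+‖x‖^2) ^ (σ/2-1)) from rfl,
    deriv_identity Q σ (‖x‖^2) hσ (sq_nonneg ‖x‖)]
  have hG0 : (0:ℝ) < 1+σ^2*‖x‖^2*(1+‖x‖^2) ^ (σ-2) := by positivity
  have hS : 0 < Real.sqrt (1+σ^2*‖x‖^2*(1+‖x‖^2) ^ (σ-2)) := Real.sqrt_pos.mpr hG0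
  gcongr
  exact scalar_key Q hQ σ hσ ‖x‖ (norm_nonneg x)
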